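/- Let M be a compact connected Hausdorff space, and let B ⊆ M be a nonempty closed connected subset admitting a collar: a topological embedding c : B × [0,1] → M with c(b,0) = b for all b ∈ B, with Set.range c a neighborhood of B in M, and with c(b,t) ∉ B whenever t > 0. Set I = M \ B with the subspace topology. Then I is one-ended: for every compact set K ⊆ I, there is exactly one connected component of I \ K whose closure in I is not compact. -/

import Mathlib

open Set Topology

/-- The interior `I = M \ B` of a compact connected Hausdorff space `M` along a nonempty
closed connected collared subset `B` (modelling a compact manifold with connected boundary)
is one-ended: for every compact `K ⊆ I` there is exactly one connected component of
`I \ K` whose closure in `I` is noncompact. -/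
theorem interior_of_compact_connected_boundary_one_ended
    (M : Type) [TopologicalSpace M] [CompactSpace M] [ConnectedSpace M] [T2Space M]
    (B : Set M) (hBne : B.Nonempty) (hBcl : IsClosed B) (hBconn : IsConnected B)
    (c : ↥B × ↥(Set.Icc (0 : ℝ) 1) → M)
    (hc : Topology.IsEmbedding c)
    (hc0 : ∀ b : ↥B, c (b, ⟨0, Set.left_mem_Icc.mpr zero_le_one⟩) = b)
    (hcnbhd : ∀ b ∈ B, Set.range c ∈ nhds b)
    (hct : ∀ (b : ↥B) (t : ↥(Set.Icc (0 : ℝ) 1)), 0 < (t : ℝ) → c (b, t) ∉ B) :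
    ∀ K : Set ↥Bᶜ, IsCompact K →
      ∃! C : Set ↥Bᶜ,
        (∃ x ∈ Kᶜ, C = connectedComponentIn Kᶜ x) ∧ ¬ IsCompact (closure C) := by
  intro K hK
  haveI : CompactSpace ↥B := isCompact_iff_compactSpace.mp hBcl.isCompact
  haveI : PreconnectedSpace ↥B := Subtype.preconnectedSpace hBconn.isPreconnected
  set K' : Set M := Subtype.val '' K with hK'def
  have hK'cpt : IsCompact K' := hK.image continuous_subtype_val
  have hK'B : K' ⊆ Bᶜ := by rintro _ ⟨x, -, rfl⟩; exact x.2
  -- the compact set of collar heights hit by K, together with 1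
  set S : Set ℝ :=
    insert 1 ((fun p : ↥B × ↥(Set.Icc (0:ℝ) 1) => (p.2 : ℝ)) '' (c ⁻¹' K')) with hSdef
  have hpre : IsCompact (c ⁻¹' K') := (hK'cpt.isClosed.preimage hc.continuous).isCompact
  have hScpt : IsCompact S := (hpre.image (continuous_subtype_val.comp continuous_snd)).insert 1
  have hSne : S.Nonempty := ⟨1, mem_insert _ _⟩
  have hSpos : ∀ s ∈ S, 0 < s := by
    rintro s (rfl | ⟨p, hp, rfl⟩)
    · exact one_pos
    · rcases lt_or_eq_of_le p.2.2.1 with h | h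
      · exact h
      · exfalso
        have hp2 : p.2 = ⟨0, Set.left_mem_Icc.mpr zero_le_one⟩ := Subtype.ext h.symm
        have hcp : c p ∈ B := by
          have : c (p.1, p.2) = (p.1 : M) := by rw [hp2]; exact hc0 p.1
          rw [← Prod.mk.eta (p := p)] at *
          rw [this]; exact p.1.2
        exact hK'B hp hcp
  set ε : ℝ := sInf S / 2 with hεdef
  have hInfmem : sInf S ∈ S := hScpt.sInf_mem hSne
  have hInfpos : 0 < sInf S := hSpos _ hInfmem
  have hεpos : 0 < ε := half_pos hInfpos
  have hεlt : ε < sInf S := half_lt_self hInfpos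
  have hε1 : ε ≤ 1 := hεlt.le.trans (csInf_le hScpt.bddBelow (mem_insert _ _))
  -- the collar map with real parameter
  set f : ↥B × ℝ → M := fun p => c (p.1, Set.projIcc 0 1 zero_le_one p.2) with hfdef
  have hf : Continuous f :=
    hc.continuous.comp (continuous_fst.prodMk (continuous_projIcc.comp continuous_snd))
  -- the collar neighborhood of infinity
  set N' : Set M := f '' ((univ : Set ↥B) ×ˢ Ioc 0 ε) with hN'def
  have hN'sub : N' ⊆ Bᶜ := by
    rintro _ ⟨⟨b, s⟩, ⟨-, hs⟩, rfl⟩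
    have hmem : s ∈ Icc (0:ℝ) 1 := ⟨hs.1.le, hs.2.trans hε1⟩
    show c (b, Set.projIcc 0 1 zero_le_one s) ∉ B
    rw [Set.projIcc_of_mem zero_le_one hmem]
    exact hct b ⟨s, hmem⟩ hs.1
  have hN'K : ∀ x ∈ N', x ∉ K' := by
    rintro _ ⟨⟨b, s⟩, ⟨-, hs⟩, rfl⟩ hxK
    have hmem : s ∈ Icc (0:ℝ) 1 := ⟨hs.1.le, hs.2.trans hε1⟩
    have hsS : s ∈ S := by
      refine mem_insert_of_mem _ ⟨(b, ⟨s, hmem⟩), ?_, rfl⟩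
      show c (b, ⟨s, hmem⟩) ∈ K'
      rw [← Set.projIcc_of_mem zero_le_one hmem]
      exact hxK
    have := csInf_le hScpt.bddBelow hsS
    linarith [hs.2]
  have hNclB : B ⊆ closure N' := by
    intro b hb
    set g : ℝ → M := fun s => f (⟨b, hb⟩, s) with hgdef
    have hg : Continuous g := hf.comp (continuous_const.prodMk continuous_id)
    have hg0 : g 0 = b := by
      show c (⟨b, hb⟩, Set.projIcc 0 1 zero_le_one 0) = b
      rw [Set.projIcc_left]
      exact hc0 ⟨b, hb⟩
    have h0cl : (0:ℝ) ∈ closure (Ioc (0:ℝ) ε) := by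
      rw [closure_Ioc hεpos.ne]
      exact Set.left_mem_Icc.mpr hεpos.le
    have h1 : g '' closure (Ioc 0 ε) ⊆ closure (g '' Ioc 0 ε) :=
      image_closure_subset_closure_image hg
    have h2 : g '' Ioc 0 ε ⊆ N' := by
      rintro _ ⟨s, hs, rfl⟩
      exact ⟨(⟨b, hb⟩, s), ⟨mem_univ _, hs⟩, rfl⟩
    exact closure_mono h2 (h1 ⟨0, h0cl, hg0⟩)
  have hN'ne : N'.Nonempty := by
    obtain ⟨b0, hb0⟩ := hBne
    exact ⟨f (⟨b0, hb0⟩, ε), (⟨b0, hb0⟩, ε), ⟨mem_univ _, hεpos, le_refl ε⟩, rfl⟩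
  have hN'conn : IsPreconnected N' :=
    (isPreconnected_univ.prod isPreconnected_Ioc).image f hf.continuousOn
  -- the collar neighborhood of infinity inside the interior
  set N : Set ↥Bᶜ := Subtype.val ⁻¹' N' with hNdef
  have hNim : Subtype.val '' N = N' := by
    rw [hNdef, Set.image_preimage_eq_inter_range, Subtype.range_coe]
    exact inter_eq_left.mpr hN'sub
  have hNconn : IsPreconnected N :=
    IsInducing.subtypeVal.isPreconnected_image.mp (by rw [hNim]; exact hN'conn)
  have hNKc : N ⊆ Kᶜ := fun x hx hxK => hN'K _ hx ⟨x, hxK, rfl⟩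
  have hNne : N.Nonempty := by
    obtain ⟨y, hy⟩ := hN'ne
    exact ⟨⟨y, hN'sub hy⟩, hy⟩
  -- any set containing the collar neighborhood has noncompact closure
  have keyA : ∀ C : Set ↥Bᶜ, N ⊆ C → ¬ IsCompact (closure C) := by
    intro C hNC hcpt
    have h1 : IsCompact (closure N) :=
      hcpt.of_isClosed_subset isClosed_closure (closure_mono hNC)
    have h2 : IsCompact (Subtype.val '' closure N) := h1.image continuous_subtype_val
    have h4 : N' ⊆ Subtype.val '' closure N := hNim ▸ image_mono subset_closure
    have h5 : closure N' ⊆ Subtype.val '' closure N :=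
      h2.isClosed.closure_subset_iff.mpr h4
    obtain ⟨b0, hb0⟩ := hBne
    obtain ⟨x, -, hx⟩ := h5 (hNclB hb0)
    exact x.2 (hx ▸ hb0)
  -- a component with noncompact closure must meet the collar neighborhood
  have keyB : ∀ C : Set ↥Bᶜ, ¬ IsCompact (closure C) → (C ∩ N).Nonempty := by
    intro C hncpt
    by_contra hdis
    apply hncpt
    set T : Set ↥(Set.Icc (0:ℝ) 1) :=
      (Subtype.val : ↥(Set.Icc (0:ℝ) 1) → ℝ) ⁻¹' Set.Iio ε with hTdef
    have hO : IsOpen ((univ : Set ↥B) ×ˢ T) :=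
      isOpen_univ.prod (isOpen_Iio.preimage continuous_subtype_val)
    obtain ⟨U, hUopen, hUpre⟩ := hc.isInducing.isOpen_iff.mp hO
    set W : Set M := c '' ((univ : Set ↥B) ×ˢ T) with hWdef
    have hWeq : W = U ∩ range c := by
      rw [hWdef, ← hUpre, Set.image_preimage_eq_inter_range]
    have hBV : B ⊆ interior W := by
      intro b hb
      rw [mem_interior_iff_mem_nhds, hWeq]
      refine Filter.inter_mem (hUopen.mem_nhds ?_) (hcnbhd b hb)
      have hmem : ((⟨b, hb⟩ : ↥B), (⟨0, Set.left_mem_Icc.mpr zero_le_one⟩ : ↥(Set.Icc (0:ℝ) 1)))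
          ∈ (univ : Set ↥B) ×ˢ T := ⟨mem_univ _, hεpos⟩
      have hW : (b : M) ∈ W := by
        have := mem_image_of_mem c hmem
        rwa [hc0 ⟨b, hb⟩] at this
      rw [hWeq] at hW
      exact hW.1
    have hWN : W ∩ Bᶜ ⊆ N' := by
      rintro x ⟨⟨⟨b, t⟩, ⟨-, ht⟩, rfl⟩, hxB⟩
      have ht0 : 0 < (t : ℝ) := by
        rcases lt_or_eq_of_le t.2.1 with h | h
        · exact h
        · exfalso
          apply hxB
          have htt : t = ⟨0, Set.left_mem_Icc.mpr zero_le_one⟩ := Subtype.ext h.symm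
          rw [htt, hc0 b]
          exact b.2
      refine ⟨(b, (t : ℝ)), ⟨mem_univ _, ht0, (show (t:ℝ) < ε from ht).le⟩, ?_⟩
      show c (b, Set.projIcc 0 1 zero_le_one (t : ℝ)) = c (b, t)
      rw [Set.projIcc_of_mem zero_le_one t.2]
    set L : Set M := (interior W)ᶜ with hLdef
    have hLcl : IsClosed L := isOpen_interior.isClosed_compl
    have hLcpt : IsCompact L := hLcl.isCompact
    have hCL : C ⊆ Subtype.val ⁻¹' L := by
      intro x hx
      intro hxV
      have hxN' : (x : M) ∈ N' := hWN ⟨interior_subset hxV, x.2⟩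
      exact hdis ⟨x, hx, hxN'⟩
    have hLpre : IsCompact (Subtype.val ⁻¹' L : Set ↥Bᶜ) := by
      rw [Subtype.isCompact_iff, Set.image_preimage_eq_inter_range, Subtype.range_coe]
      have : L ∩ Bᶜ = L := inter_eq_left.mpr (fun x hx hxB => hx (hBV hxB))
      rw [this]
      exact hLcpt
    have hclsub : closure C ⊆ Subtype.val ⁻¹' L :=
      (IsClosed.closure_subset_iff (hLcl.preimage continuous_subtype_val)).mpr hCL
    exact hLpre.of_isClosed_subset isClosed_closure hclsub
  -- assembly
  obtain ⟨x0, hx0N⟩ := hNne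
  have hx0K : x0 ∈ Kᶜ := hNKc hx0N
  have hsub : ∀ C : Set ↥Bᶜ,
      ((∃ x ∈ Kᶜ, C = connectedComponentIn Kᶜ x) ∧ ¬ IsCompact (closure C)) →
      C = connectedComponentIn Kᶜ x0 := by
    rintro C ⟨⟨x, hxK, rfl⟩, hncpt⟩
    obtain ⟨y, hyC, hyN⟩ := keyB _ hncpt
    have h1 : connectedComponentIn Kᶜ x = connectedComponentIn Kᶜ y :=
      connectedComponentIn_eq hyC
    have h2 : x0 ∈ connectedComponentIn Kᶜ y :=
      hNconn.subset_connectedComponentIn hyN hNKc hx0N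
    have h3 : connectedComponentIn Kᶜ y = connectedComponentIn Kᶜ x0 :=
      connectedComponentIn_eq h2
    exact h1.trans h3
  refine ⟨connectedComponentIn Kᶜ x0, ⟨⟨x0, hx0K, rfl⟩, ?_⟩, hsub⟩
  exact keyA _ (hNconn.subset_connectedComponentIn hx0N hNKc)
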